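/- Let B be a d-dimensional Brownian motion, L₁ ≥ 1, and for |x| ≤ R define the hitting time τ(x,R) := inf { s ≥ 0 : |x + B_s| + L₁ s ≥ R } ∧ T. Then for any x₁, x₂ with |x₁| ≤ R₁, |x₂| ≤ R₂, one has E[ |τ(x₁,R₁) − τ(x₂,R₂)| ] ≤ |x₁ − x₂| + |R₁ − R₂|. -/

import Mathlib

open Set MeasureTheory
open Filter

/-- Conditional Jensen for the norm, in an inner product space. -/
theorem norm_condExp_le_condExp_norm' {Ω : Type*} {m m0 : MeasurableSpace Ω} (hm : m ≤ m0)
    {μ : Measure Ω} [SigmaFinite (μ.trim hm)]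
    {E : Type*} [NormedAddCommGroup E] [InnerProductSpace ℝ E] [CompleteSpace E]
    [SecondCountableTopology E]
    {f : Ω → E} (hf : Integrable f μ) :
    ∀ᵐ ω ∂μ, ‖(μ[f|m]) ω‖ ≤ (μ[(fun ω => ‖f ω‖)|m]) ω := by
  obtain ⟨D, hDc, hDd⟩ := TopologicalSpace.exists_countable_dense E
  have hnf : Integrable (fun ω => ‖f ω‖) μ := hf.norm
  have key : ∀ v : E, ∀ᵐ ω ∂μ,
      (inner ℝ v ((μ[f|m]) ω) : ℝ) ≤ ‖v‖ * (μ[(fun ω => ‖f ω‖)|m]) ω := by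
    intro v
    have h1 : (fun ω => (inner ℝ v ((μ[f|m]) ω) : ℝ)) =ᵐ[μ] μ[(fun ω => (inner ℝ v (f ω) : ℝ))|m] := by
      refine ae_eq_condExp_of_forall_setIntegral_eq hm (hf.const_inner v) ?_ ?_ ?_
      · intro s _ _
        exact (integrable_condExp.const_inner v).integrableOn
      · intro s hs hμs
        rw [integral_inner (integrable_condExp.integrableOn) v,
          setIntegral_condExp hm hf hs, integral_inner (hf.integrableOn) v]
      · exact StronglyMeasurable.aestronglyMeasurable
          ((stronglyMeasurable_const.inner stronglyMeasurable_condExp))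
    have h2 : μ[(fun ω => (inner ℝ v (f ω) : ℝ))|m] ≤ᵐ[μ] μ[(fun ω => ‖v‖ * ‖f ω‖)|m] :=
      condExp_mono (hf.const_inner v) (hnf.const_mul ‖v‖)
        (Filter.Eventually.of_forall fun ω => real_inner_le_norm v (f ω))
    have h3 : μ[(fun ω => ‖v‖ * ‖f ω‖)|m] =ᵐ[μ] fun ω => ‖v‖ * (μ[(fun ω => ‖f ω‖)|m]) ω := by
      have := condExp_smul (μ := μ) (m := m) (‖v‖) (fun ω => ‖f ω‖)
      simpa [smul_eq_mul, Pi.smul_def] using this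
    filter_upwards [h1, h2, h3] with ω e1 e2 e3
    rw [e1]; exact e2.trans (le_of_eq e3)
  have hnn : 0 ≤ᵐ[μ] μ[(fun ω => ‖f ω‖)|m] :=
    condExp_nonneg (Filter.Eventually.of_forall fun ω => norm_nonneg _)
  have hball : ∀ᵐ ω ∂μ, ∀ v ∈ D, (inner ℝ v ((μ[f|m]) ω) : ℝ) ≤ ‖v‖ * (μ[(fun ω => ‖f ω‖)|m]) ω :=
    (ae_ball_iff hDc).2 fun v _ => key v
  filter_upwards [hball, hnn] with ω hω hGnn
  set w := (μ[f|m]) ω with hw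
  set G := (μ[(fun ω => ‖f ω‖)|m]) ω with hG
  -- extend from dense D to all v by continuity
  have hall : ∀ v : E, (inner ℝ v w : ℝ) ≤ ‖v‖ * G := by
    intro v
    have hclosed : IsClosed {v : E | (inner ℝ v w : ℝ) ≤ ‖v‖ * G} :=
      isClosed_le (continuous_id.inner continuous_const) ((continuous_norm).mul continuous_const)
    have : D ⊆ {v : E | (inner ℝ v w : ℝ) ≤ ‖v‖ * G} := fun v hv => hω v hv
    have := hclosed.closure_subset_iff.2 this
    rw [hDd.closure_eq] at this
    exact this (Set.mem_univ v)
  rcases eq_or_ne w 0 with h0 | h0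
  · simpa [h0] using hGnn
  · have := hall w
    rw [real_inner_self_eq_norm_mul_norm] at this
    have hwpos : 0 < ‖w‖ := norm_pos_iff.2 h0
    exact le_of_mul_le_mul_left (by linarith) hwpos

noncomputable def dy (n : ℕ) (t : ℝ) : ℝ := (⌈t * 2^n⌉ : ℤ) / 2^n

lemma le_dy (n : ℕ) (t : ℝ) : t ≤ dy n t := by
  rw [dy, le_div_iff₀ (by positivity : (0:ℝ) < 2^n)]
  exact Int.le_ceil _

lemma dy_le_add (n : ℕ) (t : ℝ) : dy n t ≤ t + 1/2^n := by
  rw [dy, div_le_iff₀ (by positivity : (0:ℝ) < 2^n)]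
  calc ((⌈t * 2^n⌉ : ℤ) : ℝ) ≤ t * 2^n + 1 := (Int.ceil_lt_add_one (t * 2^n)).le
    _ = (t + 1/2^n) * 2^n := by field_simp

lemma dy_mono (n : ℕ) {s t : ℝ} (h : s ≤ t) : dy n s ≤ dy n t := by
  rw [dy, dy]
  have h2 : (⌈s * 2^n⌉ : ℤ) ≤ ⌈t * 2^n⌉ := Int.ceil_le_ceil (by gcongr)
  have h3 : ((⌈s * 2^n⌉ : ℤ) : ℝ) ≤ ((⌈t * 2^n⌉ : ℤ) : ℝ) := by exact_mod_cast h2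
  gcongr

lemma dy_le_iff (n : ℕ) {s t : ℝ} : dy n s ≤ t ↔ s ≤ ((⌊t * 2^n⌋ : ℤ) : ℝ) / 2^n := by
  rw [dy, div_le_iff₀ (by positivity : (0:ℝ) < 2^n), le_div_iff₀ (by positivity : (0:ℝ) < 2^n)]
  rw [← Int.le_floor, Int.ceil_le]

lemma floor_div_le (n : ℕ) (t : ℝ) : ((⌊t * 2^n⌋ : ℤ) : ℝ) / 2^n ≤ t := by
  rw [div_le_iff₀ (by positivity : (0:ℝ) < 2^n)]
  exact Int.floor_le _

lemma dy_stoppingTime {Ω : Type*} {m0 : MeasurableSpace Ω} {ℱ : Filtration ℝ m0}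
    {ρ : Ω → ℝ} (hρ : IsStoppingTime ℱ (fun ω => (ρ ω : WithTop ℝ))) (n : ℕ) :
    IsStoppingTime ℱ (fun ω => ((dy n (ρ ω) : ℝ) : WithTop ℝ)) := by
  intro t
  simp only [WithTop.coe_le_coe]
  have : {ω | dy n (ρ ω) ≤ t} = {ω | ρ ω ≤ ((⌊t * 2^n⌋ : ℤ) : ℝ) / 2^n} := by
    ext ω; exact dy_le_iff n
  rw [this]
  have hρ' := hρ (((⌊t * 2^n⌋ : ℤ) : ℝ) / 2^n)
  simp only [WithTop.coe_le_coe] at hρ'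
  exact ℱ.mono (floor_div_le n t) _ hρ'

lemma dy_range_countable {Ω : Type*} (ρ : Ω → ℝ) (n : ℕ) :
    (Set.range (fun ω => ((dy n (ρ ω) : ℝ) : WithTop ℝ))).Countable := by
  have : Set.range (fun ω => ((dy n (ρ ω) : ℝ) : WithTop ℝ)) ⊆
      Set.range (fun k : ℤ => ((((k:ℝ) / 2^n) : ℝ) : WithTop ℝ)) := by
    rintro - ⟨ω, rfl⟩; exact ⟨⌈ρ ω * 2^n⌉, rfl⟩
  exact (Set.countable_range _).mono this

lemma dy_tendsto (t : ℝ) : Filter.Tendsto (fun n => dy n t) Filter.atTop (nhds t) := by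
  have h1 : Filter.Tendsto (fun n : ℕ => t + 1/2^n) Filter.atTop (nhds (t + 0)) :=
    Filter.Tendsto.const_add t (by
      simpa [one_div] using (tendsto_pow_atTop_nhds_zero_of_lt_one (by norm_num : (0:ℝ) ≤ 1/2)
        (by norm_num : (1:ℝ)/2 < 1)).congr (fun n => by rw [div_pow, one_pow, one_div]))
  rw [add_zero] at h1
  exact tendsto_of_tendsto_of_tendsto_of_le_of_le tendsto_const_nhds h1
    (fun n => le_dy n t) (fun n => dy_le_add n t)

section Hit
variable {T R : ℝ} {g : ℝ → ℝ}

lemma hitA1 (hT : 0 ≤ T) : sInf ({s ∈ Icc 0 T | R ≤ g s} ∪ {T}) ∈ Icc 0 T := by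
  have hsub : ({s ∈ Icc 0 T | R ≤ g s} ∪ {T}) ⊆ Icc 0 T := by
    rintro s (⟨hs, -⟩ | rfl)
    · exact hs
    · exact ⟨hT, le_rfl⟩
  have hne : ({s ∈ Icc 0 T | R ≤ g s} ∪ {T}).Nonempty := ⟨T, Or.inr rfl⟩
  have hbdd : BddBelow ({s ∈ Icc 0 T | R ≤ g s} ∪ {T}) := ⟨0, fun s hs => (hsub hs).1⟩
  exact ⟨le_csInf hne fun s hs => (hsub hs).1, csInf_le hbdd (Or.inr rfl)⟩

lemma hitA2 (hT : 0 ≤ T) (hg : Continuous g) (h0 : g 0 ≤ R) :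
    g (sInf ({s ∈ Icc 0 T | R ≤ g s} ∪ {T})) ≤ R := by
  set t := sInf ({s ∈ Icc 0 T | R ≤ g s} ∪ {T}) with ht
  have hmem := hitA1 (g := g) (R := R) hT
  rcases eq_or_lt_of_le hmem.1 with h | h
  · rw [ht, ← h]; exact h0
  · have key : ∀ s, 0 ≤ s → s < t → g s < R := by
      intro s hs0 hst
      by_contra hcon
      push_neg at hcon
      have hsmem : s ∈ {s ∈ Icc 0 T | R ≤ g s} ∪ {T} :=
        Or.inl ⟨⟨hs0, hst.le.trans hmem.2⟩, hcon⟩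
      have hbdd : BddBelow ({s ∈ Icc 0 T | R ≤ g s} ∪ {T}) := by
        refine ⟨0, fun u hu => ?_⟩
        rcases hu with ⟨hu, -⟩ | rfl
        · exact hu.1
        · exact hT
      exact absurd (csInf_le hbdd hsmem) (not_le.2 hst)
    have htend : Filter.Tendsto g (nhdsWithin t (Iio t)) (nhds (g t)) :=
      (hg.continuousAt).continuousWithinAt
    refine le_of_tendsto htend ?_
    filter_upwards [Ioo_mem_nhdsLT h] with s hs
    exact (key s hs.1.le hs.2).le

lemma hitA3 (hT : 0 ≤ T) (hg : Continuous g)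
    (h : sInf ({s ∈ Icc 0 T | R ≤ g s} ∪ {T}) < T) :
    R ≤ g (sInf ({s ∈ Icc 0 T | R ≤ g s} ∪ {T})) := by
  have hclosed : IsClosed ({s ∈ Icc 0 T | R ≤ g s} ∪ {T}) := by
    have : {s ∈ Icc 0 T | R ≤ g s} = Icc 0 T ∩ g ⁻¹' Ici R := by
      ext s; simp [and_comm]
    refine IsClosed.union ?_ isClosed_singleton
    rw [this]
    exact isClosed_Icc.inter (isClosed_Ici.preimage hg)
  have hne : ({s ∈ Icc 0 T | R ≤ g s} ∪ {T}).Nonempty := ⟨T, Or.inr rfl⟩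
  have hbdd : BddBelow ({s ∈ Icc 0 T | R ≤ g s} ∪ {T}) := by
    refine ⟨0, fun u hu => ?_⟩
    rcases hu with ⟨hu, -⟩ | rfl
    · exact hu.1
    · exact hT
  rcases hclosed.csInf_mem hne hbdd with ⟨-, hmem⟩ | hmem
  · exact hmem
  · rw [Set.mem_singleton_iff] at hmem
    exact absurd hmem (ne_of_lt h)

end Hit

lemma hitTime_isStoppingTime {Ω : Type*} {m0 : MeasurableSpace Ω} (ℱ : Filtration ℝ m0)
    {E : Type*} [NormedAddCommGroup E]
    (B : ℝ → Ω → E) (hBcont : ∀ ω, Continuous fun s => B s ω) (hBadapted : StronglyAdapted ℱ B)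
    (T L₁ R : ℝ) (hT : 0 ≤ T) (x : E) :
    IsStoppingTime ℱ (fun ω => ((sInf ({s ∈ Icc 0 T | R ≤ ‖x + B s ω‖ + L₁ * s} ∪ {T}) : ℝ) :
      WithTop ℝ)) := by
  have hgc : ∀ ω, Continuous (fun s => ‖x + B s ω‖ + L₁ * s) := fun ω =>
    ((continuous_const.add (hBcont ω)).norm).add (continuous_const.mul continuous_id)
  intro t
  simp only [WithTop.coe_le_coe]
  by_cases htT : T ≤ t
  · have : {ω | sInf ({s ∈ Icc 0 T | R ≤ ‖x + B s ω‖ + L₁ * s} ∪ {T}) ≤ t} = univ := by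
      refine eq_univ_of_forall fun ω => ?_
      exact le_trans (hitA1 (g := fun s => ‖x + B s ω‖ + L₁ * s) hT).2 htT
    rw [this]; exact @MeasurableSet.univ _ (ℱ t)
  push_neg at htT
  by_cases ht0 : t < 0
  · have : {ω | sInf ({s ∈ Icc 0 T | R ≤ ‖x + B s ω‖ + L₁ * s} ∪ {T}) ≤ t} = ∅ := by
      refine eq_empty_of_forall_notMem fun ω hω => ?_
      exact absurd (le_trans (hitA1 (g := fun s => ‖x + B s ω‖ + L₁ * s) hT).1 hω) (not_le.2 ht0)
    rw [this]; exact @MeasurableSet.empty _ (ℱ t)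
  push_neg at ht0
  set D : Set ℝ := insert t (Icc 0 t ∩ Set.range (fun q : ℚ => (q:ℝ))) with hD
  have hDc : D.Countable := ((Set.countable_range _).mono inter_subset_right).insert t
  have hDsub : D ⊆ Icc 0 t := insert_subset ⟨ht0, le_rfl⟩ inter_subset_left
  have hset : {ω | sInf ({s ∈ Icc 0 T | R ≤ ‖x + B s ω‖ + L₁ * s} ∪ {T}) ≤ t} =
      ⋂ (k : ℕ), ⋃ s ∈ D, {ω | R ≤ ‖x + B s ω‖ + L₁ * s + 1/(k+1)} := by
    ext ω
    set g : ℝ → ℝ := fun s => ‖x + B s ω‖ + L₁ * s with hgdef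
    constructor
    · intro hω
      simp only [Set.mem_iInter, Set.mem_iUnion]
      intro k
      set u := sInf ({s ∈ Icc 0 T | R ≤ g s} ∪ {T}) with hu
      have hu0 : 0 ≤ u := (hitA1 (g := g) hT).1
      have hgu : R ≤ g u := hitA3 hT (hgc ω) (lt_of_le_of_lt hω htT)
      have hgu' : R ≤ ‖x + B u ω‖ + L₁ * u := hgu
      have hut : u ≤ t := hω
      have hε : (0:ℝ) < 1/(k+1) := by positivity
      clear_value u
      rcases eq_or_lt_of_le hut with heq | hlt
      · refine ⟨t, mem_insert _ _, ?_⟩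
        rw [Set.mem_setOf_eq, ← heq]
        have hgu' : R ≤ ‖x + B u ω‖ + L₁ * u := hgu
        linarith
      · have hcont : ContinuousAt g u := (hgc ω).continuousAt
        rw [Metric.continuousAt_iff] at hcont
        obtain ⟨δ, hδ, hball⟩ := hcont (1/(k+1)) hε
        obtain ⟨q, hq1, hq2⟩ := exists_rat_btwn (lt_min (lt_add_of_pos_right u hδ) hlt)
        have hquδ : dist (q:ℝ) u < δ := by
          rw [Real.dist_eq, abs_of_pos (by linarith [lt_min_iff.1 hq2])]
          linarith [(lt_min_iff.1 hq2).1]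
        have hgq := hball hquδ
        rw [Real.dist_eq, abs_lt] at hgq
        have hgqB : -(1/((k:ℝ)+1)) < (‖x + B (↑q) ω‖ + L₁ * ↑q) - (‖x + B u ω‖ + L₁ * u) := hgq.1
        refine ⟨(q:ℝ), ?_, ?_⟩
        · exact Set.mem_insert_of_mem _ ⟨⟨by linarith, (lt_min_iff.1 hq2).2.le⟩, ⟨q, rfl⟩⟩
        · rw [Set.mem_setOf_eq]
          linarith
    · intro hω
      simp only [Set.mem_iInter, Set.mem_iUnion] at hω
      obtain ⟨s', hs'mem, hs'max⟩ := isCompact_Icc.exists_isMaxOn (Set.nonempty_Icc.2 ht0)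
        ((hgc ω).continuousOn (s := Icc 0 t))
      have hRs' : R ≤ g s' := by
        by_contra hcon
        push_neg at hcon
        obtain ⟨k, hk⟩ := exists_nat_one_div_lt (show (0:ℝ) < R - g s' by linarith)
        obtain ⟨s, hsD, hsR⟩ := hω k
        rw [Set.mem_setOf_eq] at hsR
        have := hs'max (hDsub hsD)
        simp only [Set.mem_setOf_eq] at this
        show False
        have hgs : g s ≤ g s' := this
        linarith
      have hmem : s' ∈ {s ∈ Icc 0 T | R ≤ g s} ∪ {T} :=
        Or.inl ⟨⟨hs'mem.1, hs'mem.2.trans htT.le⟩, hRs'⟩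
      have hbdd : BddBelow ({s ∈ Icc 0 T | R ≤ g s} ∪ {T}) := by
        refine ⟨0, fun u hu => ?_⟩
        rcases hu with ⟨hu, -⟩ | rfl
        · exact hu.1
        · exact hT
      exact le_trans (csInf_le hbdd hmem) hs'mem.2
  rw [hset]
  refine MeasurableSet.iInter fun k => ?_
  refine MeasurableSet.biUnion hDc fun s hs => ?_
  have hBs : StronglyMeasurable[ℱ t] (B s) := (hBadapted s).mono (ℱ.mono (hDsub hs).2)
  have hm : Measurable[ℱ t] fun ω => ‖x + B s ω‖ :=
    ((show Continuous fun y : E => ‖x + y‖ by fun_prop).comp_stronglyMeasurable hBs).measurable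
  exact measurableSet_le measurable_const ((hm.add_const (L₁ * s)).add_const (1/(k+1)))

theorem stopped_norm_integral_le (d : ℕ) {Ω : Type*} {m0 : MeasurableSpace Ω}
    (P : Measure Ω) [IsProbabilityMeasure P] (ℱ : Filtration ℝ m0)
    (B : ℝ → Ω → EuclideanSpace ℝ (Fin d))
    (hBcont : ∀ ω, Continuous fun s => B s ω)
    (hBmart : Martingale B ℱ P)
    (T : ℝ) (hT : 0 ≤ T)
    {σ τ : Ω → ℝ} (hσ : IsStoppingTime ℱ (fun ω => (σ ω : WithTop ℝ)))
    (hτ : IsStoppingTime ℱ (fun ω => (τ ω : WithTop ℝ)))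
    (hστ : σ ≤ τ) (hσ0 : ∀ ω, 0 ≤ σ ω) (hτT : ∀ ω, τ ω ≤ T)
    (x : EuclideanSpace ℝ (Fin d)) :
    Integrable (fun ω => ‖x + B (σ ω) ω‖) P ∧
    Integrable (fun ω => ‖x + B (τ ω) ω‖) P ∧
    ∫ ω, ‖x + B (σ ω) ω‖ ∂P ≤ ∫ ω, ‖x + B (τ ω) ω‖ ∂P := by
  have prog : ProgMeasurable ℱ B := hBmart.1.isStronglyProgressive_of_continuous hBcont
  set c : ℝ := T + 1 with hc
  have hxBc_int : Integrable (fun ω => x + B c ω) P :=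
    (integrable_const x).add (hBmart.integrable c)
  have hg_int : Integrable (fun ω => ‖x + B c ω‖) P := hxBc_int.norm
  have hdyc : ∀ (ρ : Ω → ℝ), (∀ ω, ρ ω ≤ T) → ∀ n ω, dy n (ρ ω) ≤ c := by
    intro ρ hρT n ω
    have h1 : (1:ℝ)/2^n ≤ 1 := by
      rw [div_le_one (by positivity)]
      exact one_le_pow₀ (by norm_num)
    have := dy_le_add n (ρ ω)
    have := hρT ω
    rw [hc]; linarith
  -- main helper, for a single stopping time ρ
  have H : ∀ (ρ : Ω → ℝ) (hρ : IsStoppingTime ℱ (fun ω => (ρ ω : WithTop ℝ))), (∀ ω, 0 ≤ ρ ω) → (∀ ω, ρ ω ≤ T) →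
      Integrable (fun ω => ‖x + B (ρ ω) ω‖) P ∧
      Tendsto (fun n => ∫ ω, ‖x + B (dy n (ρ ω)) ω‖ ∂P) atTop
        (nhds (∫ ω, ‖x + B (ρ ω) ω‖ ∂P)) := by
    intro ρ hρ hρ0 hρT
    have hρn : ∀ n, IsStoppingTime ℱ (fun ω => ((dy n (ρ ω) : ℝ) : WithTop ℝ)) :=
      dy_stoppingTime hρ
    have hρnc : ∀ n ω, ((dy n (ρ ω) : ℝ) : WithTop ℝ) ≤ c := fun n ω =>
      WithTop.coe_le_coe.2 (hdyc ρ hρT n ω)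
    set Y : Ω → ℝ := fun ω => ‖x + B (ρ ω) ω‖ with hY
    set Yn : ℕ → Ω → ℝ := fun n ω => ‖x + B (dy n (ρ ω)) ω‖ with hYn
    set W : ℕ → Ω → ℝ := fun n => P[(fun ω => ‖x + B c ω‖)|((hρn n).measurableSpace)] with hW
    have OS : ∀ n, stoppedValue B (fun ω => ((dy n (ρ ω) : ℝ) : WithTop ℝ)) =ᵐ[P]
        P[B c|((hρn n).measurableSpace)] := fun n =>
      hBmart.stoppedValue_ae_eq_condExp_of_le_const_of_countable_range (hρn n) (hρnc n)
        (dy_range_countable ρ n)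
    have hYnmeas : ∀ n, Measurable (Yn n) := by
      intro n
      have hsv : Measurable (stoppedValue B (fun ω => ((dy n (ρ ω) : ℝ) : WithTop ℝ))) :=
        (measurable_stoppedValue prog (hρn n)).mono (hρn n).measurableSpace_le le_rfl
      exact (measurable_const.add hsv).norm
    have hYnm : ∀ n, AEStronglyMeasurable (Yn n) P := fun n =>
      (hYnmeas n).aestronglyMeasurable
    have hYm : AEStronglyMeasurable Y P := by
      have hsv : Measurable (stoppedValue B (fun ω => (ρ ω : WithTop ℝ))) :=
        (measurable_stoppedValue prog hρ).mono hρ.measurableSpace_le le_rfl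
      exact ((measurable_const.add hsv).norm).aestronglyMeasurable
    have hdom : ∀ n, ∀ᵐ ω ∂P, Yn n ω ≤ W n ω := by
      intro n
      have hadd : P[(fun ω => x + B c ω)|((hρn n).measurableSpace)] =ᵐ[P]
          (fun ω => x + (P[B c|((hρn n).measurableSpace)]) ω) := by
        refine (condExp_add (integrable_const x) (hBmart.integrable c) _).trans ?_
        have hcc := condExp_const ((hρn n).measurableSpace_le) x (μ := P)
        filter_upwards [] with ω
        simp [hcc]
      have hjen := norm_condExp_le_condExp_norm' ((hρn n).measurableSpace_le) hxBc_int (μ := P)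
      filter_upwards [OS n, hadd, hjen] with ω h1 h2 h3
      have : Yn n ω = ‖x + (P[B c|((hρn n).measurableSpace)]) ω‖ := by
        rw [hYn]; simp only []; rw [show B (dy n (ρ ω)) ω = stoppedValue B (fun ω => ((dy n (ρ ω) : ℝ) : WithTop ℝ)) ω from rfl, h1]
      rw [this, ← h2]
      exact h3
    have hWnn : ∀ n, 0 ≤ᵐ[P] W n := fun n =>
      condExp_nonneg (Filter.Eventually.of_forall fun ω => norm_nonneg _)
    have hYn_int : ∀ n, Integrable (Yn n) P := by
      intro n
      refine Integrable.mono' (show Integrable (W n) P from integrable_condExp) (hYnm n) ?_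
      filter_upwards [hdom n] with ω h1
      rw [Real.norm_eq_abs, abs_of_nonneg (norm_nonneg _)]
      exact h1
    have hptw : ∀ ω, Tendsto (fun n => Yn n ω) atTop (nhds (Y ω)) := by
      intro ω
      have h1 : Tendsto (fun n => dy n (ρ ω)) atTop (nhds (ρ ω)) := dy_tendsto _
      have h2 : Continuous fun s => ‖x + B s ω‖ := (continuous_const.add (hBcont ω)).norm
      exact (h2.continuousAt.tendsto).comp h1
    have hbound : ∀ n, ∫⁻ ω, (‖Yn n ω‖₊ : ENNReal) ∂P ≤
        ENNReal.ofReal (∫ ω, ‖x + B c ω‖ ∂P) := by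
      intro n
      have e1 : ∫⁻ ω, (‖Yn n ω‖₊ : ENNReal) ∂P = ∫⁻ ω, ENNReal.ofReal (Yn n ω) ∂P := by
        refine lintegral_congr fun ω => ?_
        exact Real.enorm_eq_ofReal (norm_nonneg _)
      rw [e1]
      calc ∫⁻ ω, ENNReal.ofReal (Yn n ω) ∂P
          ≤ ∫⁻ ω, ENNReal.ofReal (W n ω) ∂P := by
            refine lintegral_mono_ae ?_
            filter_upwards [hdom n] with ω h1 using ENNReal.ofReal_le_ofReal h1
        _ = ENNReal.ofReal (∫ ω, W n ω ∂P) :=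
            (ofReal_integral_eq_lintegral_ofReal integrable_condExp (hWnn n)).symm
        _ = ENNReal.ofReal (∫ ω, ‖x + B c ω‖ ∂P) := by
            rw [integral_condExp ((hρn n).measurableSpace_le)]
    have hYint : Integrable Y P := by
      have e2 : ∀ ω, Tendsto (fun n => (‖Yn n ω‖₊ : ENNReal)) atTop (nhds (‖Y ω‖₊ : ENNReal)) :=
        fun ω => (ENNReal.tendsto_coe.2 ((continuous_nnnorm.tendsto _).comp (hptw ω)))
      have hfin : (∫⁻ ω, (‖Y ω‖₊ : ENNReal) ∂P) < ⊤ :=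
        calc ∫⁻ ω, (‖Y ω‖₊ : ENNReal) ∂P
            = ∫⁻ ω, Filter.liminf (fun n => (‖Yn n ω‖₊ : ENNReal)) atTop ∂P :=
              lintegral_congr fun ω => ((e2 ω).liminf_eq).symm
          _ ≤ Filter.liminf (fun n => ∫⁻ ω, (‖Yn n ω‖₊ : ENNReal) ∂P) atTop :=
              lintegral_liminf_le fun n => (hYnmeas n).nnnorm.coe_nnreal_ennreal
          _ ≤ ENNReal.ofReal (∫ ω, ‖x + B c ω‖ ∂P) :=
              Filter.liminf_le_of_frequently_le (Filter.Frequently.of_forall hbound)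
          _ < ⊤ := ENNReal.ofReal_lt_top
      exact ⟨hYm, hfin⟩
    have hui : UnifIntegrable Yn 1 P := by
      have hWui : UniformIntegrable W 1 P :=
        hg_int.uniformIntegrable_condExp (fun n => (hρn n).measurableSpace_le)
      intro ε hε
      obtain ⟨δ, hδ, hsmall⟩ := hWui.2.1 hε
      refine ⟨δ, hδ, fun n s hs hμs => le_trans ?_ (hsmall n s hs hμs)⟩
      refine eLpNorm_mono_ae ?_
      filter_upwards [hdom n, hWnn n] with ω h1 h2
      by_cases hωs : ω ∈ s
      · simp only [Set.indicator_of_mem hωs, Real.norm_eq_abs]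
        rw [abs_of_nonneg (norm_nonneg _), abs_of_nonneg h2]
        exact h1
      · simp [Set.indicator_of_notMem hωs]
    have hL1 : Tendsto (fun n => eLpNorm (Yn n - Y) 1 P) atTop (nhds 0) :=
      tendsto_Lp_finite_of_tendsto_ae le_rfl ENNReal.one_ne_top hYnm
        (memLp_one_iff_integrable.2 hYint) hui (Filter.Eventually.of_forall hptw)
    refine ⟨hYint, ?_⟩
    refine tendsto_integral_of_L1 Y hYint.aestronglyMeasurable (Filter.Eventually.of_forall hYn_int) ?_
    have : ∀ n, eLpNorm (Yn n - Y) 1 P = ∫⁻ ω, ‖Yn n ω - Y ω‖ₑ ∂P := by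
      intro n
      rw [eLpNorm_one_eq_lintegral_enorm]
      rfl
    simpa [this] using hL1
  have hτ0 : ∀ ω, 0 ≤ τ ω := fun ω => (hσ0 ω).trans (hστ ω)
  have hσT : ∀ ω, σ ω ≤ T := fun ω => (hστ ω).trans (hτT ω)
  obtain ⟨hσint, hσtend⟩ := H σ hσ hσ0 hσT
  obtain ⟨hτint, hτtend⟩ := H τ hτ hτ0 hτT
  refine ⟨hσint, hτint, ?_⟩
  -- per-n comparison
  have hcmp : ∀ n, ∫ ω, ‖x + B (dy n (σ ω)) ω‖ ∂P ≤ ∫ ω, ‖x + B (dy n (τ ω)) ω‖ ∂P := by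
    intro n
    have hσn := dy_stoppingTime hσ n
    have hτn := dy_stoppingTime hτ n
    have hστn : (fun ω => ((dy n (σ ω) : ℝ) : WithTop ℝ)) ≤ fun ω => ((dy n (τ ω) : ℝ) : WithTop ℝ) :=
      fun ω => WithTop.coe_le_coe.2 (dy_mono n (hστ ω))
    have hτnc : ∀ ω, ((dy n (τ ω) : ℝ) : WithTop ℝ) ≤ c := fun ω =>
      WithTop.coe_le_coe.2 (hdyc τ hτT n ω)
    have OS1 : stoppedValue B (fun ω => ((dy n (σ ω) : ℝ) : WithTop ℝ)) =ᵐ[P]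
        P[stoppedValue B (fun ω => ((dy n (τ ω) : ℝ) : WithTop ℝ))|hσn.measurableSpace] :=
      hBmart.stoppedValue_ae_eq_condExp_of_le_of_countable_range hτn hσn hστn hτnc
        (dy_range_countable τ n) (dy_range_countable σ n)
    have OS2 : stoppedValue B (fun ω => ((dy n (τ ω) : ℝ) : WithTop ℝ)) =ᵐ[P] P[B c|hτn.measurableSpace] :=
      hBmart.stoppedValue_ae_eq_condExp_of_le_const_of_countable_range hτn hτnc
        (dy_range_countable τ n)
    have hsvτ_int : Integrable (stoppedValue B (fun ω => ((dy n (τ ω) : ℝ) : WithTop ℝ))) P :=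
      integrable_condExp.congr OS2.symm
    have hZ_int : Integrable (fun ω => x + stoppedValue B (fun ω => ((dy n (τ ω) : ℝ) : WithTop ℝ)) ω) P :=
      (integrable_const x).add hsvτ_int
    have hadd : P[(fun ω => x + stoppedValue B (fun ω => ((dy n (τ ω) : ℝ) : WithTop ℝ)) ω)|hσn.measurableSpace]
        =ᵐ[P] (fun ω => x + (P[stoppedValue B (fun ω => ((dy n (τ ω) : ℝ) : WithTop ℝ))|hσn.measurableSpace]) ω) := by
      refine (condExp_add (integrable_const x) hsvτ_int _).trans ?_
      have hcc := condExp_const (hσn.measurableSpace_le) x (μ := P)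
      filter_upwards [] with ω
      simp [hcc]
    have hjen := norm_condExp_le_condExp_norm' (hσn.measurableSpace_le) hZ_int (μ := P)
    have hYσn_int : Integrable (fun ω => ‖x + B (dy n (σ ω)) ω‖) P := by
      refine Integrable.mono' (show Integrable
        (P[(fun ω => ‖x + stoppedValue B (fun ω => ((dy n (τ ω) : ℝ) : WithTop ℝ)) ω‖)|hσn.measurableSpace]) P
        from integrable_condExp) ?_ ?_
      · have hsv : Measurable (stoppedValue B (fun ω => ((dy n (σ ω) : ℝ) : WithTop ℝ))) :=
          (measurable_stoppedValue prog hσn).mono hσn.measurableSpace_le le_rfl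
        exact ((measurable_const.add hsv).norm).aestronglyMeasurable
      · filter_upwards [OS1, hadd, hjen] with ω h1 h2 h3
        rw [Real.norm_eq_abs, abs_of_nonneg (norm_nonneg _)]
        show ‖x + B (dy n (σ ω)) ω‖ ≤ _
        rw [show B (dy n (σ ω)) ω = stoppedValue B (fun ω => ((dy n (σ ω) : ℝ) : WithTop ℝ)) ω from rfl, h1, ← h2]
        exact h3
    calc ∫ ω, ‖x + B (dy n (σ ω)) ω‖ ∂P
        ≤ ∫ ω, (P[(fun ω => ‖x + stoppedValue B (fun ω => ((dy n (τ ω) : ℝ) : WithTop ℝ)) ω‖)|hσn.measurableSpace]) ω ∂P := by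
          refine integral_mono_ae hYσn_int integrable_condExp ?_
          filter_upwards [OS1, hadd, hjen] with ω h1 h2 h3
          rw [show B (dy n (σ ω)) ω = stoppedValue B (fun ω => ((dy n (σ ω) : ℝ) : WithTop ℝ)) ω from rfl, h1, ← h2]
          exact h3
      _ = ∫ ω, ‖x + stoppedValue B (fun ω => ((dy n (τ ω) : ℝ) : WithTop ℝ)) ω‖ ∂P :=
          integral_condExp hσn.measurableSpace_le
      _ = ∫ ω, ‖x + B (dy n (τ ω)) ω‖ ∂P := rfl
  exact le_of_tendsto_of_tendsto' hσtend hτtend hcmp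

/-- Regularity of the hitting times `τ(x,R) = inf { s : |x + B_s| + L₁ s ≥ R } ∧ T`
of a Brownian motion (continuous martingale started at 0):
`E[|τ(x₁,R₁) − τ(x₂,R₂)|] ≤ |x₁ − x₂| + |R₁ − R₂|` whenever `|xᵢ| ≤ Rᵢ`. -/
theorem hitting_time_L1_regularity (d : ℕ) (T L₁ : ℝ) (hT : 0 < T) (hL : 1 ≤ L₁)
    {Ω : Type*} {m0 : MeasurableSpace Ω} (P : Measure Ω) [IsProbabilityMeasure P]
    (ℱ : Filtration ℝ m0)
    (B : ℝ → Ω → EuclideanSpace ℝ (Fin d))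
    (hB0 : ∀ ω, B 0 ω = 0)
    (hBcont : ∀ ω, Continuous fun s => B s ω)
    (hBmart : Martingale B ℱ P)
    (x₁ x₂ : EuclideanSpace ℝ (Fin d)) (R₁ R₂ : ℝ)
    (h1 : ‖x₁‖ ≤ R₁) (h2 : ‖x₂‖ ≤ R₂)
    (τ : EuclideanSpace ℝ (Fin d) → ℝ → Ω → ℝ)
    (hτ : ∀ x R ω, τ x R ω = sInf ({s ∈ Icc 0 T | R ≤ ‖x + B s ω‖ + L₁ * s} ∪ {T})) :
    ∫ ω, |τ x₁ R₁ ω - τ x₂ R₂ ω| ∂P ≤ ‖x₁ - x₂‖ + |R₁ - R₂| := by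
  have hgc : ∀ (x : EuclideanSpace ℝ (Fin d)) (ω : Ω),
      Continuous fun s => ‖x + B s ω‖ + L₁ * s := fun x ω =>
    ((continuous_const.add (hBcont ω)).norm).add (continuous_const.mul continuous_id)
  have hg0 : ∀ (x : EuclideanSpace ℝ (Fin d)) (R : ℝ), ‖x‖ ≤ R → ∀ ω : Ω,
      ‖x + B 0 ω‖ + L₁ * 0 ≤ R := by
    intro x R hxR ω
    rw [hB0 ω, add_zero, mul_zero, add_zero]
    exact hxR
  -- stopping times
  have hstop : ∀ (x : EuclideanSpace ℝ (Fin d)) (R : ℝ),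
      IsStoppingTime ℱ (fun ω => (τ x R ω : WithTop ℝ)) := by
    intro x R
    have := hitTime_isStoppingTime ℱ B hBcont hBmart.1 T L₁ R hT.le x
    have hfun : τ x R = fun ω => sInf ({s ∈ Icc 0 T | R ≤ ‖x + B s ω‖ + L₁ * s} ∪ {T}) :=
      funext (hτ x R)
    rw [hfun]
    exact this
  have hmem : ∀ (x : EuclideanSpace ℝ (Fin d)) (R : ℝ) (ω : Ω), τ x R ω ∈ Icc 0 T := by
    intro x R ω; rw [hτ x R ω]; exact hitA1 hT.le
  have hA2 : ∀ (x : EuclideanSpace ℝ (Fin d)) (R : ℝ), ‖x‖ ≤ R → ∀ ω : Ω,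
      ‖x + B (τ x R ω) ω‖ + L₁ * (τ x R ω) ≤ R := by
    intro x R hxR ω
    rw [hτ x R ω]
    exact hitA2 hT.le (hgc x ω) (hg0 x R hxR ω)
  have hA3 : ∀ (x : EuclideanSpace ℝ (Fin d)) (R : ℝ) (ω : Ω), τ x R ω < T →
      R ≤ ‖x + B (τ x R ω) ω‖ + L₁ * (τ x R ω) := by
    intro x R ω hlt
    rw [hτ x R ω] at hlt ⊢
    exact hitA3 hT.le (hgc x ω) hlt
  set t1 := τ x₁ R₁ with ht1def
  set t2 := τ x₂ R₂ with ht2def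
  set σf : Ω → ℝ := fun ω => min (t1 ω) (t2 ω) with hσfdef
  have hσstop : IsStoppingTime ℱ (fun ω => (σf ω : WithTop ℝ)) := by
    show IsStoppingTime ℱ (fun ω => ((min (t1 ω) (t2 ω) : ℝ) : WithTop ℝ))
    simp only [WithTop.coe_min]
    exact (hstop x₁ R₁).min (hstop x₂ R₂)
  have hσ0 : ∀ ω, 0 ≤ σf ω := fun ω => le_min (hmem x₁ R₁ ω).1 (hmem x₂ R₂ ω).1
  have K1 := stopped_norm_integral_le (τ := t1) d P ℱ B hBcont hBmart T hT.le hσstop (hstop x₁ R₁)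
    (fun ω => min_le_left _ _) hσ0 (fun ω => (hmem x₁ R₁ ω).2) x₁
  have K2 := stopped_norm_integral_le (τ := t2) d P ℱ B hBcont hBmart T hT.le hσstop (hstop x₂ R₂)
    (fun ω => min_le_right _ _) hσ0 (fun ω => (hmem x₂ R₂ ω).2) x₂
  set δ : ℝ := ‖x₁ - x₂‖ + |R₁ - R₂| with hδdef
  have hδ0 : 0 ≤ δ := add_nonneg (norm_nonneg _) (abs_nonneg _)
  -- pointwise inequality
  have hptw : ∀ ω, |t1 ω - t2 ω| ≤ δ + (‖x₂ + B (σf ω) ω‖ - ‖x₂ + B (t2 ω) ω‖)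
      + (‖x₁ + B (σf ω) ω‖ - ‖x₁ + B (t1 ω) ω‖) := by
    intro ω
    have hm1 := hmem x₁ R₁ ω
    have hm2 := hmem x₂ R₂ ω
    rcases lt_trichotomy (t1 ω) (t2 ω) with hlt | heq | hgt
    · have e1 : σf ω = t1 ω := min_eq_left hlt.le
      have h3 := hA3 x₁ R₁ ω (lt_of_lt_of_le hlt (hmem x₂ R₂ ω).2)
      have h4 := hA2 x₂ R₂ h2 ω
      have htri : ‖x₁ + B (t1 ω) ω‖ ≤ ‖x₂ + B (t1 ω) ω‖ + ‖x₁ - x₂‖ := by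
        have e : x₁ + B (t1 ω) ω = (x₂ + B (t1 ω) ω) + (x₁ - x₂) := by abel
        rw [e]; exact norm_add_le _ _
      have habs : R₂ - R₁ ≤ |R₁ - R₂| := by
        rw [abs_sub_comm]; exact le_abs_self _
      have hmul : t2 ω - t1 ω ≤ L₁ * (t2 ω - t1 ω) :=
        le_mul_of_one_le_left (by linarith) hL
      have hexp : L₁ * (t2 ω - t1 ω) = L₁ * t2 ω - L₁ * t1 ω := by ring
      rw [e1, abs_of_nonpos (by linarith)]
      rw [hδdef]
      linarith
    · have e1 : σf ω = t1 ω := min_eq_left heq.le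
      rw [e1, heq]
      simp only [sub_self, abs_zero, add_zero]
      linarith
    · have e1 : σf ω = t2 ω := min_eq_right hgt.le
      have h3 := hA3 x₂ R₂ ω (lt_of_lt_of_le hgt (hmem x₁ R₁ ω).2)
      have h4 := hA2 x₁ R₁ h1 ω
      have htri : ‖x₂ + B (t2 ω) ω‖ ≤ ‖x₁ + B (t2 ω) ω‖ + ‖x₁ - x₂‖ := by
        have e : x₂ + B (t2 ω) ω = (x₁ + B (t2 ω) ω) - (x₁ - x₂) := by abel
        rw [e]; exact norm_sub_le _ _
      have habs : R₁ - R₂ ≤ |R₁ - R₂| := le_abs_self _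
      have hmul : t1 ω - t2 ω ≤ L₁ * (t1 ω - t2 ω) :=
        le_mul_of_one_le_left (by linarith) hL
      have hexp : L₁ * (t1 ω - t2 ω) = L₁ * t1 ω - L₁ * t2 ω := by ring
      rw [e1, abs_of_nonneg (by linarith)]
      rw [hδdef]
      linarith
  -- integrability of |t1 - t2|
  have hmeas : ∀ (x : EuclideanSpace ℝ (Fin d)) (R : ℝ), Measurable (τ x R) := by
    intro x R
    refine measurable_of_Iic fun c => ?_
    have hc := hstop x R c
    simp only [WithTop.coe_le_coe] at hc
    exact ℱ.le c _ hc
  have hIntLHS : Integrable (fun ω => |t1 ω - t2 ω|) P := by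
    refine Integrable.mono' (integrable_const T)
      (((hmeas x₁ R₁).sub (hmeas x₂ R₂)).abs.aestronglyMeasurable) ?_
    refine Filter.Eventually.of_forall fun ω => ?_
    have hm1 := hmem x₁ R₁ ω
    have hm2 := hmem x₂ R₂ ω
    rw [Real.norm_eq_abs, abs_abs, abs_le]
    exact ⟨by linarith [hm1.1, hm1.2, hm2.1, hm2.2], by linarith [hm1.1, hm1.2, hm2.1, hm2.2]⟩
  have hRHSint : Integrable (fun ω => δ + (‖x₂ + B (σf ω) ω‖ - ‖x₂ + B (t2 ω) ω‖)
      + (‖x₁ + B (σf ω) ω‖ - ‖x₁ + B (t1 ω) ω‖)) P :=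
    ((integrable_const δ).add (K2.1.sub K2.2.1)).add (K1.1.sub K1.2.1)
  have hintegral : ∫ ω, (δ + (‖x₂ + B (σf ω) ω‖ - ‖x₂ + B (t2 ω) ω‖)
        + (‖x₁ + B (σf ω) ω‖ - ‖x₁ + B (t1 ω) ω‖)) ∂P
      = δ + ((∫ ω, ‖x₂ + B (σf ω) ω‖ ∂P) - ∫ ω, ‖x₂ + B (t2 ω) ω‖ ∂P)
      + ((∫ ω, ‖x₁ + B (σf ω) ω‖ ∂P) - ∫ ω, ‖x₁ + B (t1 ω) ω‖ ∂P) := by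
    have i2 : Integrable (fun ω => ‖x₂ + B (σf ω) ω‖ - ‖x₂ + B (t2 ω) ω‖) P := K2.1.sub K2.2.1
    have i1 : Integrable (fun ω => ‖x₁ + B (σf ω) ω‖ - ‖x₁ + B (t1 ω) ω‖) P := K1.1.sub K1.2.1
    have j2 : Integrable (fun ω => δ + (‖x₂ + B (σf ω) ω‖ - ‖x₂ + B (t2 ω) ω‖)) P :=
      (integrable_const δ).add i2
    rw [integral_add j2 i1, integral_add (integrable_const δ) i2,
      integral_sub K2.1 K2.2.1, integral_sub K1.1 K1.2.1, integral_const]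
    simp [measure_univ]
  have hfinal : ∫ ω, |t1 ω - t2 ω| ∂P ≤ δ := by
    refine le_trans (integral_mono_ae hIntLHS hRHSint (Filter.Eventually.of_forall hptw)) ?_
    rw [hintegral]
    linarith [K1.2.2, K2.2.2]
  exact hfinal
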